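/- (Lemma 1 (a), Buell) For every reduced integral binary quadratic form f of discriminant D there exists exactly one reduced form of discriminant D adjacent to the right of f, and exactly one reduced form of discriminant D adjacent to the left of f. -/
import Mathlib




/-- In each residue class mod `t`, exactly one integer in `(s - t, s)` when `s` irrational. -/
lemma interval_lemma (s : ℝ) (hs : Irrational s) (t r : ℤ) (ht : 0 < t) :
    ∃! b : ℤ, t ∣ (b - r) ∧ s - t < b ∧ (b : ℝ) < s := by
  have htr : (0:ℝ) < t := by exact_mod_cast ht
  set k : ℤ := ⌈((r : ℝ) - s) / t⌉ with hk
  refine ⟨r - t * k, ⟨⟨-k, by ring⟩, ?_, ?_⟩, ?_⟩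
  · have h1 : ((k : ℝ)) < ((r : ℝ) - s) / t + 1 := Int.ceil_lt_add_one _
    have : (k : ℝ) * t < (r : ℝ) - s + t := by
      have h2 := mul_lt_mul_of_pos_right h1 htr
      rwa [add_mul, one_mul, div_mul_cancel₀ _ (ne_of_gt htr)] at h2
    push_cast
    nlinarith
  · have h1 : ((r : ℝ) - s) / t ≤ (k : ℝ) := Int.le_ceil _
    have h2 : (r : ℝ) - s ≤ (k : ℝ) * t := by
      calc (r : ℝ) - s = (((r : ℝ) - s)/t) * t := by field_simp
        _ ≤ (k:ℝ) * t := mul_le_mul_of_nonneg_right h1 htr.le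
    have h3 : ((r - t * k : ℤ) : ℝ) ≤ s := by push_cast; nlinarith
    rcases h3.lt_or_eq with h | h
    · exact h
    · exact absurd h.symm (hs.ne_int (r - t*k))
  · rintro b ⟨⟨m, hm⟩, hb1, hb2⟩
    have hd : t ∣ (b - (r - t * k)) := ⟨m + k, by rw [show b - (r - t*k) = (b - r) + t*k by ring, hm]; ring⟩
    have hlt : |b - (r - t * k)| < t := by
      have e1 : s - t < ((r - t * k : ℤ) : ℝ) := by
        have h1 : ((k : ℝ)) < ((r : ℝ) - s) / t + 1 := Int.ceil_lt_add_one _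
        have : (k : ℝ) * t < (r : ℝ) - s + t := by
          have h2 := mul_lt_mul_of_pos_right h1 htr
          rwa [add_mul, one_mul, div_mul_cancel₀ _ (ne_of_gt htr)] at h2
        push_cast; nlinarith
      have e2 : ((r - t * k : ℤ) : ℝ) < s := by
        have h1 : ((r : ℝ) - s) / t ≤ (k : ℝ) := Int.le_ceil _
        have h2 : (r : ℝ) - s ≤ (k : ℝ) * t := by
          calc (r : ℝ) - s = (((r : ℝ) - s)/t) * t := by field_simp
            _ ≤ (k:ℝ) * t := mul_le_mul_of_nonneg_right h1 htr.le
        have h3 : ((r - t * k : ℤ) : ℝ) ≤ s := by push_cast; nlinarith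
        rcases h3.lt_or_eq with h | h
        · exact h
        · exact absurd h.symm (hs.ne_int (r - t*k))
      have : |((b - (r - t*k) : ℤ) : ℝ)| < t := by
        rw [abs_lt]; push_cast; push_cast at e1 e2; constructor <;> nlinarith
      exact_mod_cast this
    by_contra hne
    have hne' : b - (r - t * k) ≠ 0 := fun h => hne (by omega)
    have := Int.le_of_dvd (abs_pos.mpr hne') ((dvd_abs _ _).mpr hd)
    omega

/-- Symmetry of the reduced condition in the outer coefficients. -/
lemma sym_lemma (s : ℝ) (D a c b : ℤ) (hs2 : s ^ 2 = (D : ℝ))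
    (h : b ^ 2 - 4 * a * c = D) (hb : 0 < b) (h2 : (b : ℝ) < s)
    (h1 : abs (s - 2 * |(a : ℝ)|) < b) : abs (s - 2 * |(c : ℝ)|) < b := by
  have hbr : (0:ℝ) < b := by exact_mod_cast hb
  have hreal : (b:ℝ)^2 - 4 * a * c = s^2 := by rw [hs2]; exact_mod_cast congrArg (Int.cast : ℤ → ℝ) h
  have hac : (a:ℝ) * c < 0 := by nlinarith
  have hprod : 4 * (|(a:ℝ)| * |(c:ℝ)|) = s^2 - (b:ℝ)^2 := by
    rw [← abs_mul, abs_of_neg hac]; nlinarith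
  have hA : 0 < |(a:ℝ)| := by
    rcases (abs_nonneg (a:ℝ)).lt_or_eq with h | h
    · exact h
    · exfalso; nlinarith [abs_nonneg (c:ℝ)]
  have hC : 0 < |(c:ℝ)| := by
    rcases (abs_nonneg (c:ℝ)).lt_or_eq with h | h
    · exact h
    · exfalso; nlinarith
  rw [abs_lt] at h1 ⊢
  obtain ⟨h1a, h1b⟩ := h1
  constructor
  · -- -b < s - 2|c|, i.e. 2|c| < s + b ; from s - b < 2|a|
    nlinarith
  · -- s - 2|c| < b, i.e. s - b < 2|c| ; from 2|a| < s + b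
    nlinarith

lemma key_lemma (s : ℝ) (hs : Irrational s) (hs0 : 0 ≤ s) (D a c b : ℤ)
    (h : b ^ 2 - 4 * a * c = D) (h1 : abs (s - 2 * |(c : ℝ)|) < b) (h2 : (b : ℝ) < s) :
    ∃! p : ℤ × ℤ, (p.1 ^ 2 - 4 * c * p.2 = D ∧ (2 * c) ∣ (b + p.1)) ∧
      abs (s - 2 * |(c : ℝ)|) < (p.1 : ℝ) ∧ (p.1 : ℝ) < s := by
  have hb : 0 < b := by
    have h0 : (0:ℝ) ≤ abs (s - 2 * |(c : ℝ)|) := abs_nonneg _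
    have : (0:ℝ) < b := lt_of_le_of_lt h0 h1
    exact_mod_cast this
  have hc : c ≠ 0 := by
    rintro rfl
    simp only [Int.cast_zero, abs_zero, mul_zero, sub_zero, abs_of_nonneg hs0] at h1
    linarith
  set t : ℤ := 2 * |c| with htd
  have ht : 0 < t := by positivity
  have htr : (t : ℝ) = 2 * |(c : ℝ)| := by
    rw [htd]; push_cast [Int.cast_abs]; ring
  obtain ⟨b', ⟨⟨m, hm⟩, hb'1, hb'2⟩, huniq⟩ := interval_lemma s hs t (-b) ht
  have hdvd : (2 * c) ∣ (b + b') := by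
    have h1' : t ∣ (b + b') := ⟨m, by omega⟩
    have : |2 * c| = t := by rw [abs_mul]; simp [htd]
    rw [← abs_dvd, this]; exact h1'
  -- strengthen interval bound
  have hb'abs : abs (s - 2 * |(c : ℝ)|) < (b' : ℝ) := by
    rw [← htr]
    rcases le_or_gt (t:ℝ) s with hts | hts
    · rwa [abs_of_nonneg (by linarith)]
    · rw [abs_of_neg (by linarith)]
      by_contra hcon
      push_neg at hcon
      -- b' ≤ t - s ; also s - t < b' ; so |b'| ≤ t - s
      have hbb : b + b' = 0 := by
        by_contra hne
        have hle := Int.le_of_dvd (abs_pos.mpr hne) ((dvd_abs _ _).mpr (⟨m, by omega⟩ : t ∣ (b + b')))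
        have hbr : (0:ℝ) < b := by exact_mod_cast hb
        have : |((b + b' : ℤ) : ℝ)| < t := by
          rw [abs_lt]; push_cast
          constructor
          · nlinarith
          · nlinarith
        have : |b + b'| < t := by exact_mod_cast this
        omega
      -- then b' = -b, so s - t < -b, i.e. b < t - s, contradicting h1
      have hb'eq : (b' : ℝ) = -(b : ℝ) := by
        have : b' = -b := by omega
        rw [this]; push_cast; ring
      rw [abs_of_neg (by linarith : s - 2 * |(c:ℝ)| < 0), ← htr] at h1
      rw [hb'eq] at hb'1
      linarith
  obtain ⟨k, hk⟩ := hdvd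
  refine ⟨(b', a - b * k + c * k ^ 2), ⟨⟨?_, ⟨k, hk⟩⟩, hb'abs, hb'2⟩, ?_⟩
  · have hb'e : b' = 2 * c * k - b := by linarith
    rw [hb'e]; linear_combination h
  · rintro ⟨q1, q2⟩ ⟨⟨hq, hqd⟩, hqa, hqs⟩
    have hq1 : q1 = b' := by
      refine huniq q1 ⟨?_, ?_, hqs⟩
      · have habs : |2 * c| = t := by rw [abs_mul]; simp [htd]
        have h5 : t ∣ b + q1 := by rw [← habs]; exact (abs_dvd _ _).mpr hqd
        rw [show q1 - (-b) = b + q1 from by ring]; exact h5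
      · have h6 : s - (t:ℝ) ≤ abs (s - 2 * |(c:ℝ)|) := by rw [← htr]; exact le_abs_self _
        exact lt_of_le_of_lt h6 hqa
    have hq2 : q2 = a - b * k + c * k ^ 2 := by
      have hb'e : b' = 2 * c * k - b := by linarith
      have h2' : b' ^ 2 - 4 * c * q2 = D := by rw [← hq1]; exact hq
      have : 4 * c * q2 = 4 * c * (a - b * k + c * k ^ 2) := by
        have e1 : b' ^ 2 - 4 * c * (a - b*k + c*k^2) = D := by
          rw [hb'e]; linear_combination h
        linarith
      have hc4 : (4 * c : ℤ) ≠ 0 := by simp [hc]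
      exact mul_left_cancel₀ hc4 (by linarith)
    simp [hq1, hq2]

/-- The discriminant of the integral binary quadratic form `(a, b, c)`,
represented as the triple `f = (a, (b, c))`. -/
def disc (f : ℤ × ℤ × ℤ) : ℤ := f.2.1 ^ 2 - 4 * f.1 * f.2.2

/-- The form `(a, b, c)` of discriminant `D > 0` is reduced:
`|√D - 2|a|| < b < √D` (as real numbers). -/
def IsReducedForm (D : ℤ) (f : ℤ × ℤ × ℤ) : Prop :=
  disc f = D ∧
  abs (Real.sqrt (D : ℝ) - 2 * |(f.1 : ℝ)|) < (f.2.1 : ℝ) ∧ (f.2.1 : ℝ) < Real.sqrt (D : ℝ)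

/-- `g = (a₂, b₂, c₂)` is adjacent to the right of `f = (a₁, b₁, c₁)`:
both have discriminant `D`, `c₁ = a₂`, and `b₁ + b₂ ≡ 0 (mod 2 a₂)`. -/
def AdjRight (D : ℤ) (f g : ℤ × ℤ × ℤ) : Prop :=
  disc f = D ∧ disc g = D ∧ f.2.2 = g.1 ∧ (2 * g.1) ∣ (f.2.1 + g.2.1)

/-- Lemma 1 (a) (Buell): every reduced form of discriminant `D` has a unique
reduced form adjacent to its right and a unique reduced form adjacent to its
left. -/
theorem stmt_12 (D : ℤ) (hD : 0 < D) (hDsq : ¬ IsSquare D)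
    (f : ℤ × ℤ × ℤ) (hf : IsReducedForm D f) :
    (∃! g : ℤ × ℤ × ℤ, IsReducedForm D g ∧ AdjRight D f g) ∧
    (∃! g : ℤ × ℤ × ℤ, IsReducedForm D g ∧ AdjRight D g f) := by
  set s : ℝ := Real.sqrt (D : ℝ) with hsdef
  have hs0 : 0 ≤ s := Real.sqrt_nonneg _
  have hs2 : s ^ 2 = (D : ℝ) := Real.sq_sqrt (by exact_mod_cast hD.le)
  have hirr : Irrational s := (irrational_sqrt_intCast_iff_of_nonneg hD.le).mpr hDsq
  obtain ⟨hfd, hfa, hfs⟩ := hf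
  have hdisc : f.2.1 ^ 2 - 4 * f.1 * f.2.2 = D := hfd
  have hb0 : 0 < f.2.1 := by
    have : (0 : ℝ) < f.2.1 := lt_of_le_of_lt (abs_nonneg _) hfa
    exact_mod_cast this
  constructor
  · -- right neighbor
    have h1c : abs (s - 2 * |(f.2.2 : ℝ)|) < (f.2.1 : ℝ) :=
      sym_lemma s D f.1 f.2.2 f.2.1 hs2 hdisc hb0 hfs hfa
    obtain ⟨p, ⟨⟨hp1, hp2⟩, hp3, hp4⟩, hpu⟩ :=
      key_lemma s hirr hs0 D f.1 f.2.2 f.2.1 hdisc h1c hfs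
    refine ⟨(f.2.2, p.1, p.2), ⟨⟨?_, ?_, ?_⟩, ?_, ?_, rfl, ?_⟩, ?_⟩
    · simpa [disc] using hp1
    · simpa using hp3
    · simpa using hp4
    · exact hfd
    · simpa [disc] using hp1
    · simpa using hp2
    · rintro ⟨g1, g2, g3⟩ ⟨⟨hgd, hga, hgs⟩, _, _, hce, hdv⟩
      simp only [disc] at hgd
      simp only at hce hdv hga hgs
      have hpe : (g2, g3) = p := by
        refine hpu (g2, g3) ⟨⟨?_, ?_⟩, ?_, ?_⟩
        · simpa [← hce] using hgd
        · simpa [hce] using hdv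
        · simpa [hce] using hga
        · simpa using hgs
      have h1 : g2 = p.1 := by rw [← hpe]
      have h2 : g3 = p.2 := by rw [← hpe]
      simp [← hce, h1, h2]
  · -- left neighbor
    have hdisc2 : f.2.1 ^ 2 - 4 * f.2.2 * f.1 = D := by linear_combination hdisc
    obtain ⟨p, ⟨⟨hp1, hp2⟩, hp3, hp4⟩, hpu⟩ :=
      key_lemma s hirr hs0 D f.2.2 f.1 f.2.1 hdisc2 hfa hfs
    have hp0 : 0 < p.1 := by
      have : (0 : ℝ) < p.1 := lt_of_le_of_lt (abs_nonneg _) hp3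
      exact_mod_cast this
    have habs : abs (s - 2 * |(p.2 : ℝ)|) < (p.1 : ℝ) :=
      sym_lemma s D f.1 p.2 p.1 hs2 hp1 hp0 hp4 hp3
    refine ⟨(p.2, p.1, f.1), ⟨⟨?_, ?_, ?_⟩, ?_, ?_, rfl, ?_⟩, ?_⟩
    · simp only [disc]; linear_combination hp1
    · simpa using habs
    · simpa using hp4
    · simp only [disc]; linear_combination hp1
    · exact hfd
    · simpa [add_comm] using hp2
    · rintro ⟨g1, g2, g3⟩ ⟨⟨hgd, hga, hgs⟩, hgd2, _, hce, hdv⟩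
      simp only [disc] at hgd
      simp only at hce hdv hga hgs
      have hg2 : 0 < g2 := by
        have : (0 : ℝ) < g2 := lt_of_le_of_lt (abs_nonneg _) hga
        exact_mod_cast this
      have hga' : abs (s - 2 * |(f.1 : ℝ)|) < (g2 : ℝ) :=
        sym_lemma s D g1 f.1 g2 hs2 (by linear_combination hgd + 4 * g1 * hce) hg2 hgs hga
      have hpe : (g2, g1) = p := by
        refine hpu (g2, g1) ⟨⟨?_, ?_⟩, ?_, ?_⟩
        · linear_combination hgd + 4 * g1 * hce
        · simpa [add_comm] using hdv
        · exact hga'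
        · exact hgs
      have h1 : g2 = p.1 := by rw [← hpe]
      have h2 : g1 = p.2 := by rw [← hpe]
      simp [hce, h1, h2]
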